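/- arXiv:2003.02960 — 2 statements merged into one kernel-verified Lean document; each statement's English description precedes it below -/
import Mathlib

section
/- Let A_r be an n_r × p real matrix and A_f an n_f × p real matrix. Set Θ_rr = A_r A_rᵀ, Θ_rf = A_r A_fᵀ, Θ_ff = A_f A_fᵀ, and let Θ be the (n_r + n_f) × (n_r + n_f) block matrix fromBlocks(Θ_rr, Θ_rf, Θ_rfᵀ, Θ_ff). Assume Θ_rr is invertible and the Schur complement Θ_ff − Θ_rfᵀ Θ_rr⁻¹ Θ_rf is invertible, and set M = (Θ_ff − Θ_rfᵀ Θ_rr⁻¹ Θ_rf)⁻¹ (so Θ is invertible). Let e_r ∈ ℝ^{n_r}, e_f ∈ ℝ^{n_f}, and let e ∈ ℝ^{n_r+n_f} be their concatenation, and let A be the (n_r+n_f) × p matrix obtained by stacking A_r over A_f. Then A_rᵀ Θ_rr⁻¹ e_r − Aᵀ Θ⁻¹ e = P A_fᵀ M V, where P = I_p − A_rᵀ Θ_rr⁻¹ A_r and V = −e_f + Θ_rfᵀ Θ_rr⁻¹ e_r. -/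
set_option maxHeartbeats 2000000

open Matrix

/-- **Proposition 2 (NTK optimal one-shot scrubbing shift) as an exact linear-algebra identity.**
With `Θ_rr = A_r A_rᵀ`, `Θ_rf = A_r A_fᵀ`, `Θ_ff = A_f A_fᵀ`, `Θ` the full NTK block matrix,
`M` the inverse Schur complement, `A` the stacked gradient matrix and `e` the stacked residuals,
the difference between the convergence points of linearized training on the retain set and on the
full dataset equals `P A_fᵀ M V`, where `P = I - A_rᵀ Θ_rr⁻¹ A_r` and
`V = -e_f + Θ_rfᵀ Θ_rr⁻¹ e_r`. -/
theorem ntk_scrubbing_shift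
    {nr nf p : ℕ} (Ar : Matrix (Fin nr) (Fin p) ℝ) (Af : Matrix (Fin nf) (Fin p) ℝ)
    (er : Fin nr → ℝ) (ef : Fin nf → ℝ)
    (hrr : IsUnit (Ar * Arᵀ))
    (hM : IsUnit (Af * Afᵀ - (Ar * Afᵀ)ᵀ * (Ar * Arᵀ)⁻¹ * (Ar * Afᵀ))) :
    Arᵀ.mulVec ((Ar * Arᵀ)⁻¹.mulVec er) -
        (fromRows Ar Af)ᵀ.mulVec
          ((fromBlocks (Ar * Arᵀ) (Ar * Afᵀ) (Ar * Afᵀ)ᵀ (Af * Afᵀ))⁻¹.mulVec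
            (Sum.elim er ef)) =
      (1 - Arᵀ * (Ar * Arᵀ)⁻¹ * Ar).mulVec
        (Afᵀ.mulVec
          ((Af * Afᵀ - (Ar * Afᵀ)ᵀ * (Ar * Arᵀ)⁻¹ * (Ar * Afᵀ))⁻¹.mulVec
            (-ef + (Ar * Afᵀ)ᵀ.mulVec ((Ar * Arᵀ)⁻¹.mulVec er)))) := by
  letI iA : Invertible (Ar * Arᵀ) := hrr.invertible
  have hiA : ⅟(Ar * Arᵀ) = (Ar * Arᵀ)⁻¹ := invOf_eq_nonsing_inv _
  letI iS : Invertible (Af * Afᵀ - (Ar * Afᵀ)ᵀ * ⅟(Ar * Arᵀ) * (Ar * Afᵀ)) := by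
    rw [hiA]; exact hM.invertible
  have hiS : ⅟(Af * Afᵀ - (Ar * Afᵀ)ᵀ * ⅟(Ar * Arᵀ) * (Ar * Afᵀ)) =
      (Af * Afᵀ - (Ar * Afᵀ)ᵀ * (Ar * Arᵀ)⁻¹ * (Ar * Afᵀ))⁻¹ := by
    rw [invOf_eq_nonsing_inv, hiA]
  letI iΘ := fromBlocks₁₁Invertible (Ar * Arᵀ) (Ar * Afᵀ) (Ar * Afᵀ)ᵀ (Af * Afᵀ)
  have hΘ : (fromBlocks (Ar * Arᵀ) (Ar * Afᵀ) (Ar * Afᵀ)ᵀ (Af * Afᵀ))⁻¹ =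
      fromBlocks
        ((Ar * Arᵀ)⁻¹ + (Ar * Arᵀ)⁻¹ * (Ar * Afᵀ) *
            (Af * Afᵀ - (Ar * Afᵀ)ᵀ * (Ar * Arᵀ)⁻¹ * (Ar * Afᵀ))⁻¹ * (Ar * Afᵀ)ᵀ * (Ar * Arᵀ)⁻¹)
        (-((Ar * Arᵀ)⁻¹ * (Ar * Afᵀ) *
            (Af * Afᵀ - (Ar * Afᵀ)ᵀ * (Ar * Arᵀ)⁻¹ * (Ar * Afᵀ))⁻¹))
        (-((Af * Afᵀ - (Ar * Afᵀ)ᵀ * (Ar * Arᵀ)⁻¹ * (Ar * Afᵀ))⁻¹ * (Ar * Afᵀ)ᵀ * (Ar * Arᵀ)⁻¹))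
        ((Af * Afᵀ - (Ar * Afᵀ)ᵀ * (Ar * Arᵀ)⁻¹ * (Ar * Afᵀ))⁻¹) := by
    rw [← invOf_eq_nonsing_inv, invOf_fromBlocks₁₁_eq, hiS, hiA]
  rw [hΘ, transpose_fromRows, fromBlocks_mulVec, fromCols_mulVec_sumElim]
  set B : Matrix (Fin nr) (Fin nf) ℝ := Ar * Afᵀ with hB
  set X : Matrix (Fin nr) (Fin nr) ℝ := (Ar * Arᵀ)⁻¹ with hX
  set M : Matrix (Fin nf) (Fin nf) ℝ := (Af * Afᵀ - Bᵀ * X * B)⁻¹ with hMdef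
  have hB2 : ∀ {q : Type} (Z : Matrix (Fin nf) q ℝ), Ar * (Afᵀ * Z) = B * Z := by
    intro q Z; rw [← Matrix.mul_assoc, hB]
  simp only [Sum.elim_comp_inl, Sum.elim_comp_inr, Matrix.add_mulVec, Matrix.sub_mulVec,
    Matrix.neg_mulVec, Matrix.one_mulVec, Matrix.mulVec_add, Matrix.mulVec_neg,
    Matrix.mulVec_mulVec, Matrix.mul_assoc, Matrix.mul_add, Matrix.add_mul, Matrix.mul_neg,
    Matrix.neg_mul, Matrix.mul_one, Matrix.one_mul, Matrix.sub_mul, Matrix.mul_sub, hB2]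
  abel
end

section
/- Let A be an n×p real matrix with Θ = A Aᵀ invertible, let f₀, Y ∈ ℝ^n, and let η > 0. Define w : ℝ → ℝ^p by w(t) = Aᵀ Θ⁻¹ (I − exp(−η Θ t)) (Y − f₀), where exp denotes the matrix exponential. Then w(0) = 0 and, for every t ∈ ℝ, w has derivative at t equal to −η Aᵀ (f₀ + A w(t) − Y); i.e., w solves the continuous gradient-descent (gradient-flow) equation ẇ = −η ∇f₀ᵀ ∇_{f} L for the L2 loss L(w) = (1/2)‖f₀ + A w − Y‖² of the linearized model. -/
open Matrix

attribute [local instance] Matrix.linftyOpNormedRing Matrix.linftyOpNormedAlgebra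

/-- The linear map `M ↦ Aᵀ Θ⁻¹ M v` on matrices. -/
noncomputable def phiAux {n p : ℕ} (A : Matrix (Fin n) (Fin p) ℝ) (v : Fin n → ℝ) :
    Matrix (Fin n) (Fin n) ℝ →ₗ[ℝ] (Fin p → ℝ) where
  toFun := fun M => Aᵀ.mulVec ((A * Aᵀ)⁻¹.mulVec (M.mulVec v))
  map_add' := fun M N => by simp [Matrix.add_mulVec, Matrix.mulVec_add]
  map_smul' := fun c M => by simp [Matrix.smul_mulVec, Matrix.mulVec_smul]

/-- **Closed-form solution of the linearized weight dynamics (eq. (8)).**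
`w(t) = Aᵀ Θ⁻¹ (I - exp(-η Θ t)) (Y - f₀)` satisfies `w(0) = 0` and the gradient-flow equation
`ẇ = -η Aᵀ (f₀ + A w - Y)` for the L2 loss of the linearized model. -/
theorem linearized_weight_dynamics
    {n p : ℕ} (A : Matrix (Fin n) (Fin p) ℝ) (hΘ : IsUnit (A * Aᵀ))
    (f₀ Y : Fin n → ℝ) (η : ℝ) (hη : 0 < η)
    (w : ℝ → (Fin p → ℝ))
    (hw : w = fun t => Aᵀ.mulVec ((A * Aᵀ)⁻¹.mulVec
      ((1 - NormedSpace.exp ((-η * t) • (A * Aᵀ))).mulVec (Y - f₀)))) :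
    w 0 = 0 ∧
      ∀ t : ℝ, HasDerivAt w ((-η) • (Aᵀ.mulVec (f₀ + A.mulVec (w t) - Y))) t := by
  have hinv : (A * Aᵀ)⁻¹ * (A * Aᵀ) = 1 :=
    Matrix.nonsing_inv_mul _ (isUnit_iff_isUnit_det _ |>.mp hΘ)
  have hinv' : (A * Aᵀ) * (A * Aᵀ)⁻¹ = 1 :=
    Matrix.mul_nonsing_inv _ (isUnit_iff_isUnit_det _ |>.mp hΘ)
  set Θ := A * Aᵀ with hΘdef
  set v := Y - f₀ with hv
  set L := (phiAux A v).toContinuousLinearMap with hL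
  have hLapp : ∀ M : Matrix (Fin n) (Fin n) ℝ,
      L M = Aᵀ.mulVec (Θ⁻¹.mulVec (M.mulVec v)) := fun M => rfl
  have hwL : w = fun t => L (1 - NormedSpace.exp ((-η * t) • Θ)) := by
    rw [hw]; funext t; rw [hLapp]
  constructor
  · rw [hwL]
    simp [NormedSpace.exp_zero, hLapp]
  · intro t
    have hE : HasDerivAt (fun u : ℝ => NormedSpace.exp ((-η * u) • Θ))
        ((-η) • (Θ * NormedSpace.exp ((-η * t) • Θ))) t := by
      have h1 : HasDerivAt (fun s : ℝ => NormedSpace.exp (s • Θ))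
          (Θ * NormedSpace.exp ((-η * t) • Θ)) (-η * t) :=
        hasDerivAt_exp_smul_const' Θ (-η * t)
      have h2 : HasDerivAt (fun u : ℝ => -η * u) (-η) t := by
        simpa using (hasDerivAt_id t).const_mul (-η)
      have h3 := h1.scomp t h2
      simp [Function.comp_def, mul_comm] at h3 ⊢
      exact h3
    have hE' : HasDerivAt (fun u : ℝ => 1 - NormedSpace.exp ((-η * u) • Θ))
        (-((-η) • (Θ * NormedSpace.exp ((-η * t) • Θ)))) t := hE.const_sub 1
    have hd : HasDerivAt w (L (-((-η) • (Θ * NormedSpace.exp ((-η * t) • Θ))))) t := by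
      rw [hwL]
      exact L.hasFDerivAt.comp_hasDerivAt t hE'
    convert hd using 1
    rw [hwL]
    simp only [map_neg, _root_.map_smul, hLapp]
    have key : Θ⁻¹.mulVec ((Θ * NormedSpace.exp ((-η * t) • Θ)).mulVec v)
        = (NormedSpace.exp ((-η * t) • Θ)).mulVec v := by
      rw [Matrix.mulVec_mulVec, ← Matrix.mul_assoc, hinv, Matrix.one_mul]
    have hAw : A.mulVec (Aᵀ.mulVec (Θ⁻¹.mulVec
        ((1 - NormedSpace.exp ((-η * t) • Θ)).mulVec v)))
        = (1 - NormedSpace.exp ((-η * t) • Θ)).mulVec v := by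
      rw [Matrix.mulVec_mulVec, Matrix.mulVec_mulVec, ← hΘdef, hinv', Matrix.one_mulVec]
    rw [hAw]
    have h3 : f₀ + (1 - NormedSpace.exp ((-η * t) • Θ)).mulVec v - Y
        = -((NormedSpace.exp ((-η * t) • Θ)).mulVec v) := by
      rw [Matrix.sub_mulVec, Matrix.one_mulVec, hv]
      abel
    rw [h3]
    simp only [Matrix.neg_mulVec, Matrix.smul_mulVec, Matrix.mulVec_neg,
      Matrix.mulVec_smul, key, neg_neg, neg_smul, smul_neg]
end
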